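/- arXiv:1412.0276 — 2 statements merged into one kernel-verified Lean document; each statement's English description precedes it below -/
import Mathlib

section
/- Let $\varepsilon>0$, $\lambda\in\mathbb{R}$ and let $P_\lambda=\begin{pmatrix}-\varepsilon & -\lambda\\ \lambda & \varepsilon\end{pmatrix}$. There exists a nonzero solution $f:\mathbb{R}\to\mathbb{R}^2$ of $f'(t)=P_\lambda f(t)$ with $f(0)=f(1)$ if and only if either $\lambda=\pm\varepsilon$, or $\lambda=\pm\sqrt{(2\pi n)^2+\varepsilon^2}$ for some nonzero integer $n$. -/
open Real

private lemma hasDerivAt_cos_mul (w t : ℝ) :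
    HasDerivAt (fun s : ℝ => Real.cos (w * s)) (-Real.sin (w * t) * w) t := by
  have h : HasDerivAt (fun s : ℝ => w * s) w t := by
    simpa using (hasDerivAt_id t).const_mul w
  exact (Real.hasDerivAt_cos (w * t)).comp t h

private lemma hasDerivAt_sin_mul (w t : ℝ) :
    HasDerivAt (fun s : ℝ => Real.sin (w * s)) (Real.cos (w * t) * w) t := by
  have h : HasDerivAt (fun s : ℝ => w * s) w t := by
    simpa using (hasDerivAt_id t).const_mul w
  exact (Real.hasDerivAt_sin (w * t)).comp t h

/-- Second derivative of a component of a linear system. -/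
private lemma deriv2 {u v : ℝ → ℝ} (hu : Differentiable ℝ u) (hv : Differentiable ℝ v)
    (a b : ℝ) (h : ∀ t, deriv u t = a * u t + b * v t) :
    Differentiable ℝ (deriv u) ∧
      ∀ t, deriv (deriv u) t = a * deriv u t + b * deriv v t := by
  have heq : deriv u = fun t => a * u t + b * v t := funext h
  have hd : ∀ t : ℝ, HasDerivAt (fun t => a * u t + b * v t)
      (a * deriv u t + b * deriv v t) t := fun t =>
    (((hu t).hasDerivAt).const_mul a).add (((hv t).hasDerivAt).const_mul b)
  constructor
  · rw [heq]; exact fun t => (hd t).differentiableAt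
  · intro t
    have h3 : deriv (deriv u) t = deriv (fun t => a * u t + b * v t) t := by rw [heq]
    rw [h3]
    exact (hd t).deriv

/-- If `u'' = k² u` with `k ≠ 0` and `s² = k²`, and `u`, `u'` are 1-periodic at the endpoints,
then `u' + s u ≡ 0`. -/
private lemma exp_aux {u : ℝ → ℝ} {k s : ℝ} (hsk : s ^ 2 = k ^ 2) (hs : s ≠ 0)
    (hu : Differentiable ℝ u) (hu' : Differentiable ℝ (deriv u))
    (h2 : ∀ t, deriv (deriv u) t = k ^ 2 * u t)
    (hp : u 0 = u 1) (hp' : deriv u 0 = deriv u 1) :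
    ∀ t, deriv u t + s * u t = 0 := by
  have hder : ∀ t, HasDerivAt (fun t => (deriv u t + s * u t) * Real.exp (-(s * t))) 0 t := by
    intro t
    have he : HasDerivAt (fun t : ℝ => Real.exp (-(s * t))) (Real.exp (-(s * t)) * (-s)) t := by
      have h0 : HasDerivAt (fun t : ℝ => -(s * t)) (-s) t := by
        exact (((hasDerivAt_id t).const_mul s).neg).congr_deriv (by simp)
      exact (Real.hasDerivAt_exp (-(s * t))).comp t h0
    have h1 : HasDerivAt (fun t => deriv u t + s * u t)
        (deriv (deriv u) t + s * deriv u t) t :=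
      ((hu' t).hasDerivAt).add (((hu t).hasDerivAt).const_mul s)
    have h3 := h1.mul he
    have hval : (deriv (deriv u) t + s * deriv u t) * Real.exp (-(s * t))
        + (deriv u t + s * u t) * (Real.exp (-(s * t)) * (-s)) = 0 := by
      rw [h2 t]; linear_combination (-(Real.exp (-(s * t)) * u t)) * hsk
    rwa [hval] at h3
  have hc : ∀ t : ℝ, (fun t => (deriv u t + s * u t) * Real.exp (-(s * t))) t
      = (fun t => (deriv u t + s * u t) * Real.exp (-(s * t))) 0 := fun t =>
    is_const_of_deriv_eq_zero (fun x => (hder x).differentiableAt)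
      (fun x => (hder x).deriv) t 0
  have h0 : deriv u 0 + s * u 0 = 0 := by
    have h1 := hc 1
    simp only [mul_zero, neg_zero, Real.exp_zero, mul_one] at h1
    rw [← hp, ← hp'] at h1
    have hexp : Real.exp (-s) ≠ 1 := fun hh => hs (by simpa using hh)
    have := mul_eq_zero.mp (show (deriv u 0 + s * u 0) * (Real.exp (-s) - 1) = 0 by
      linear_combination h1)
    rcases this with h | h
    · exact h
    · exact absurd (by linarith : Real.exp (-s) = 1) hexp
  intro t
  have ht := hc t
  simp only [mul_zero, neg_zero, Real.exp_zero, mul_one] at ht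
  rw [h0] at ht
  exact (mul_eq_zero.mp ht).resolve_right (Real.exp_ne_zero _)

/-- Hyperbolic case: `u'' = k² u`, `k ≠ 0`, with periodic boundary data forces `u ≡ 0`. -/
private lemma exp_case {u : ℝ → ℝ} {k : ℝ} (hk : k ≠ 0) (hu : Differentiable ℝ u)
    (hu' : Differentiable ℝ (deriv u))
    (h2 : ∀ t, deriv (deriv u) t = k ^ 2 * u t)
    (hp : u 0 = u 1) (hp' : deriv u 0 = deriv u 1) : ∀ t, u t = 0 := by
  have hA := exp_aux rfl hk hu hu' h2 hp hp'
  have hB := exp_aux (show (-k) ^ 2 = k ^ 2 by ring) (neg_ne_zero.2 hk) hu hu' h2 hp hp'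
  intro t
  have h1 := hA t
  have h2 := hB t
  have h3 : (2 * k) * u t = 0 := by linarith
  exact (mul_eq_zero.mp h3).resolve_left (by simpa using hk)

/-- Elliptic case: `u'' = -w² u`, `w ≠ 0`, periodic boundary data, and `cos w ≠ 1`
force `u ≡ 0`. -/
private lemma trig_case {u : ℝ → ℝ} {w : ℝ} (hw : w ≠ 0) (hu : Differentiable ℝ u)
    (hu' : Differentiable ℝ (deriv u))
    (h2 : ∀ t, deriv (deriv u) t = -(w ^ 2) * u t)
    (hp : u 0 = u 1) (hp' : deriv u 0 = deriv u 1)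
    (hcos : Real.cos w ≠ 1) : ∀ t, u t = 0 := by
  have hAder : ∀ t, HasDerivAt
      (fun t => u t * Real.cos (w * t) - deriv u t * Real.sin (w * t) / w) 0 t := by
    intro t
    have h1 := ((hu t).hasDerivAt).mul (hasDerivAt_cos_mul w t)
    have h2' := (((hu' t).hasDerivAt).mul (hasDerivAt_sin_mul w t)).div_const w
    have h3 := h1.sub h2'
    have hval : deriv u t * Real.cos (w * t) + u t * (-Real.sin (w * t) * w)
        - (deriv (deriv u) t * Real.sin (w * t) + deriv u t * (Real.cos (w * t) * w)) / w
        = 0 := by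
      rw [h2 t]; field_simp; ring
    rwa [hval] at h3
  have hBder : ∀ t, HasDerivAt
      (fun t => u t * Real.sin (w * t) + deriv u t * Real.cos (w * t) / w) 0 t := by
    intro t
    have h1 := ((hu t).hasDerivAt).mul (hasDerivAt_sin_mul w t)
    have h2' := (((hu' t).hasDerivAt).mul (hasDerivAt_cos_mul w t)).div_const w
    have h3 := h1.add h2'
    have hval : deriv u t * Real.sin (w * t) + u t * (Real.cos (w * t) * w)
        + (deriv (deriv u) t * Real.cos (w * t) + deriv u t * (-Real.sin (w * t) * w)) / w
        = 0 := by
      rw [h2 t]; field_simp; ring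
    rwa [hval] at h3
  have hcA : ∀ t : ℝ, u t * Real.cos (w * t) - deriv u t * Real.sin (w * t) / w
      = u 0 * Real.cos (w * 0) - deriv u 0 * Real.sin (w * 0) / w := fun t =>
    is_const_of_deriv_eq_zero (fun x => (hAder x).differentiableAt)
      (fun x => (hAder x).deriv) t 0
  have hcB : ∀ t : ℝ, u t * Real.sin (w * t) + deriv u t * Real.cos (w * t) / w
      = u 0 * Real.sin (w * 0) + deriv u 0 * Real.cos (w * 0) / w := fun t =>
    is_const_of_deriv_eq_zero (fun x => (hBder x).differentiableAt)
      (fun x => (hBder x).deriv) t 0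
  -- evaluate the constants at t = 1 and use periodicity
  have e1 := hcA 1
  have e2 := hcB 1
  rw [← hp, ← hp'] at e1 e2
  simp only [mul_one, mul_zero, Real.cos_zero, Real.sin_zero, zero_div, sub_zero,
    zero_add, add_zero] at e1 e2
  have key : ((u 0) ^ 2 * w ^ 2 + (deriv u 0) ^ 2) * (Real.cos w - 1) = 0 := by
    field_simp at e1 e2
    linear_combination (w * u 0) * e1 + deriv u 0 * e2
  have hab : (u 0) ^ 2 * w ^ 2 + (deriv u 0) ^ 2 = 0 :=
    (mul_eq_zero.mp key).resolve_right (sub_ne_zero.mpr hcos)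
  have ha0 : u 0 = 0 := by
    have h1 : (u 0 * w) ^ 2 = 0 :=
      le_antisymm (by nlinarith [sq_nonneg (deriv u 0)]) (sq_nonneg _)
    exact (mul_eq_zero.mp (sq_eq_zero_iff.mp h1)).resolve_right hw
  have hd0 : deriv u 0 = 0 := by
    have h1 : (deriv u 0) ^ 2 = 0 :=
      le_antisymm (by nlinarith [sq_nonneg (u 0 * w)]) (sq_nonneg _)
    exact sq_eq_zero_iff.mp h1
  intro t
  have hA := hcA t
  have hB := hcB t
  simp only [mul_zero, Real.cos_zero, Real.sin_zero, zero_div, sub_zero, mul_one,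
    zero_add, add_zero] at hA hB
  rw [ha0] at hA
  rw [hd0] at hB
  simp only [zero_div] at hB
  have hiden : u t = (u t * Real.cos (w * t) - deriv u t * Real.sin (w * t) / w)
      * Real.cos (w * t)
      + (u t * Real.sin (w * t) + deriv u t * Real.cos (w * t) / w) * Real.sin (w * t) := by
    linear_combination (-(u t)) * Real.sin_sq_add_cos_sq (w * t)
  rw [hiden, hA, hB]; ring

/-- Eigenvalues of the asymptotic operator of a positive hyperbolic Reeb orbit:
there is a nonzero periodic solution of `f' = P_λ f` with
`P_λ = ![![-ε, -λ], ![λ, ε]]` iff `λ = ±ε` or `λ = ±√((2πn)² + ε²)`, `n ≠ 0`. -/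
theorem stmt_1 (ε lam : ℝ) (hε : 0 < ε) :
    (∃ f₁ f₂ : ℝ → ℝ, Differentiable ℝ f₁ ∧ Differentiable ℝ f₂ ∧
        (∀ t, deriv f₁ t = -ε * f₁ t - lam * f₂ t) ∧
        (∀ t, deriv f₂ t = lam * f₁ t + ε * f₂ t) ∧
        (¬ ∀ t, f₁ t = 0 ∧ f₂ t = 0) ∧
        f₁ 0 = f₁ 1 ∧ f₂ 0 = f₂ 1) ↔
      (lam = ε ∨ lam = -ε ∨
        ∃ n : ℤ, n ≠ 0 ∧ (lam = Real.sqrt ((2 * Real.pi * n) ^ 2 + ε ^ 2) ∨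
          lam = -Real.sqrt ((2 * Real.pi * n) ^ 2 + ε ^ 2))) := by
  constructor
  · rintro ⟨f₁, f₂, hf1, hf2, hd1, hd2, hne, hp1, hp2⟩
    have h1' : ∀ t, deriv f₁ t = (-ε) * f₁ t + (-lam) * f₂ t := fun t => by rw [hd1 t]; ring
    have h2' : ∀ t, deriv f₂ t = ε * f₂ t + lam * f₁ t := fun t => by rw [hd2 t]; ring
    obtain ⟨hdd1, hsnd1⟩ := deriv2 hf1 hf2 (-ε) (-lam) h1'
    obtain ⟨hdd2, hsnd2⟩ := deriv2 hf2 hf1 ε lam h2'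
    have hsec1 : ∀ t, deriv (deriv f₁) t = (ε ^ 2 - lam ^ 2) * f₁ t := by
      intro t; rw [hsnd1 t, hd1 t, hd2 t]; ring
    have hsec2 : ∀ t, deriv (deriv f₂) t = (ε ^ 2 - lam ^ 2) * f₂ t := by
      intro t; rw [hsnd2 t, hd1 t, hd2 t]; ring
    have hdp1 : deriv f₁ 0 = deriv f₁ 1 := by rw [hd1 0, hd1 1, hp1, hp2]
    have hdp2 : deriv f₂ 0 = deriv f₂ 1 := by rw [hd2 0, hd2 1, hp1, hp2]
    rcases lt_trichotomy (lam ^ 2) (ε ^ 2) with hlt | heqsq | hgt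
    · exfalso
      set k := Real.sqrt (ε ^ 2 - lam ^ 2) with hk_def
      have hk2 : k ^ 2 = ε ^ 2 - lam ^ 2 := Real.sq_sqrt (by linarith)
      have hk : k ≠ 0 := ne_of_gt (Real.sqrt_pos.2 (by linarith))
      have hz1 := exp_case hk hf1 hdd1 (fun t => by rw [hsec1 t, hk2]) hp1 hdp1
      have hz2 := exp_case hk hf2 hdd2 (fun t => by rw [hsec2 t, hk2]) hp2 hdp2
      exact hne fun t => ⟨hz1 t, hz2 t⟩
    · have : (lam - ε) * (lam + ε) = 0 := by linear_combination heqsq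
      rcases mul_eq_zero.mp this with h | h
      · exact Or.inl (by linarith)
      · exact Or.inr (Or.inl (by linarith))
    · set w := Real.sqrt (lam ^ 2 - ε ^ 2) with hw_def
      have hw2 : w ^ 2 = lam ^ 2 - ε ^ 2 := Real.sq_sqrt (by linarith)
      have hwpos : 0 < w := Real.sqrt_pos.2 (by linarith)
      have hw : w ≠ 0 := ne_of_gt hwpos
      have hcos : Real.cos w = 1 := by
        by_contra hcos
        have hz1 := trig_case hw hf1 hdd1
          (fun t => by rw [hsec1 t, hw2]; ring) hp1 hdp1 hcos
        have hz2 := trig_case hw hf2 hdd2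
          (fun t => by rw [hsec2 t, hw2]; ring) hp2 hdp2 hcos
        exact hne fun t => ⟨hz1 t, hz2 t⟩
      obtain ⟨n, hn⟩ := (Real.cos_eq_one_iff w).mp hcos
      have hnpos : (0 : ℝ) < (n : ℝ) := by
        by_contra h
        push_neg at h
        have : (n : ℝ) * (2 * Real.pi) ≤ 0 :=
          mul_nonpos_of_nonpos_of_nonneg h (by positivity)
        rw [hn] at this; linarith
    -- n ≠ 0
      have hn0 : n ≠ 0 := by
        intro h; rw [h] at hnpos; simp at hnpos
      refine Or.inr (Or.inr ⟨n, hn0, ?_⟩)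
      have key : (2 * Real.pi * (n : ℝ)) ^ 2 + ε ^ 2 = lam ^ 2 := by
        have h1 : ((n : ℝ) * (2 * Real.pi)) ^ 2 = w ^ 2 := by rw [hn]
        rw [hw2] at h1
        nlinarith [h1]
      rcases le_or_gt 0 lam with h | h
      · left; rw [key]; exact (Real.sqrt_sq h).symm
      · right; rw [key, Real.sqrt_sq_eq_abs, abs_of_neg h]; ring
  · rintro (rfl | rfl | ⟨n, hn0, hlam⟩)
    · refine ⟨fun _ => 1, fun _ => -1, differentiable_const _, differentiable_const _,
        ?_, ?_, fun h => by simpa using (h 0).1, rfl, rfl⟩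
      · intro t; simp only [deriv_const']; ring
      · intro t; simp only [deriv_const']; ring
    · refine ⟨fun _ => 1, fun _ => 1, differentiable_const _, differentiable_const _,
        ?_, ?_, fun h => by simpa using (h 0).1, rfl, rfl⟩
      · intro t; simp only [deriv_const']; ring
      · intro t; simp only [deriv_const']; ring
    · set w : ℝ := 2 * Real.pi * (n : ℝ) with hw_def
      have hw : w ≠ 0 := by
        have hn' : (n : ℝ) ≠ 0 := Int.cast_ne_zero.2 hn0
        exact mul_ne_zero (mul_ne_zero two_ne_zero Real.pi_ne_zero) hn'
      have hlam2 : lam ^ 2 = w ^ 2 + ε ^ 2 := by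
        rcases hlam with rfl | rfl
        · rw [Real.sq_sqrt (by positivity)]
        · rw [neg_pow, Real.sq_sqrt (by positivity)]; ring
      have has1 : ∀ t, HasDerivAt (fun t => w * Real.cos (w * t) - ε * Real.sin (w * t))
          (w * (-Real.sin (w * t) * w) - ε * (Real.cos (w * t) * w)) t := fun t =>
        ((hasDerivAt_cos_mul w t).const_mul w).sub ((hasDerivAt_sin_mul w t).const_mul ε)
      have has2 : ∀ t, HasDerivAt (fun t => lam * Real.sin (w * t))
          (lam * (Real.cos (w * t) * w)) t := fun t =>
        (hasDerivAt_sin_mul w t).const_mul lam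
      have hcosw : Real.cos w = 1 := by
        rw [hw_def, show 2 * Real.pi * (n : ℝ) = (n : ℝ) * (2 * Real.pi) by ring]
        exact Real.cos_int_mul_two_pi n
      have hsinw : Real.sin w = 0 := by
        rw [hw_def,
          show 2 * Real.pi * (n : ℝ) = ((2 * n : ℤ) : ℝ) * Real.pi by push_cast; ring]
        exact Real.sin_int_mul_pi _
      refine ⟨fun t => w * Real.cos (w * t) - ε * Real.sin (w * t),
        fun t => lam * Real.sin (w * t),
        fun t => (has1 t).differentiableAt, fun t => (has2 t).differentiableAt,
        ?_, ?_, ?_, ?_, ?_⟩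
      · intro t
        rw [(has1 t).deriv]
        linear_combination Real.sin (w * t) * hlam2
      · intro t
        rw [(has2 t).deriv]
        ring
      · intro h
        have h0 := (h 0).1
        simp only [mul_zero, Real.cos_zero, Real.sin_zero, mul_one, sub_zero] at h0
        exact hw h0
      · simp [hcosw, hsinw]
      · simp [hsinw]
end

section
/- Let $\varepsilon>0$, $\lambda\in\mathbb{R}$ and $P_\lambda=\begin{pmatrix}-\varepsilon & -\lambda\\ \lambda & \varepsilon\end{pmatrix}$. There exists a nonzero solution $f:\mathbb{R}\to\mathbb{R}^2$ of $f'(t)=P_\lambda f(t)$ with $f(1)=-f(0)$ (antiperiodic boundary condition) if and only if $\lambda=\pm\sqrt{((2n-1)\pi)^2+\varepsilon^2}$ for some positive integer $n$. -/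
open Set Real

lemma ode_uniq {ε lam : ℝ} {f₁ f₂ g₁ g₂ : ℝ → ℝ}
    (hf₁ : Differentiable ℝ f₁) (hf₂ : Differentiable ℝ f₂)
    (hf₁' : ∀ t, deriv f₁ t = -ε * f₁ t - lam * f₂ t)
    (hf₂' : ∀ t, deriv f₂ t = lam * f₁ t + ε * f₂ t)
    (hg₁ : Differentiable ℝ g₁) (hg₂ : Differentiable ℝ g₂)
    (hg₁' : ∀ t, deriv g₁ t = -ε * g₁ t - lam * g₂ t)
    (hg₂' : ∀ t, deriv g₂ t = lam * g₁ t + ε * g₂ t)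
    (h1 : f₁ 0 = g₁ 0) (h2 : f₂ 0 = g₂ 0) :
    ∀ t, f₁ t = g₁ t ∧ f₂ t = g₂ t := by
  intro t
  set L : (ℝ × ℝ) →L[ℝ] (ℝ × ℝ) :=
    (((-ε) • ContinuousLinearMap.fst ℝ ℝ ℝ + (-lam) • ContinuousLinearMap.snd ℝ ℝ ℝ).prod
      (lam • ContinuousLinearMap.fst ℝ ℝ ℝ + ε • ContinuousLinearMap.snd ℝ ℝ ℝ)) with hL
  have hLa : ∀ x : ℝ × ℝ, L x = (-ε * x.1 - lam * x.2, lam * x.1 + ε * x.2) := by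
    intro x
    simp [hL, ContinuousLinearMap.prod_apply, smul_eq_mul]
    ring
  have hd : ∀ (u₁ u₂ : ℝ → ℝ), Differentiable ℝ u₁ → Differentiable ℝ u₂ →
      (∀ t, deriv u₁ t = -ε * u₁ t - lam * u₂ t) →
      (∀ t, deriv u₂ t = lam * u₁ t + ε * u₂ t) →
      ∀ s, HasDerivAt (fun r => (u₁ r, u₂ r)) (L (u₁ s, u₂ s)) s := by
    intro u₁ u₂ hu₁ hu₂ hu₁' hu₂' s
    rw [hLa, ← hu₁' s, ← hu₂' s]
    exact HasDerivAt.prodMk ((hu₁ s).hasDerivAt) ((hu₂ s).hasDerivAt)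
  have key : EqOn (fun r => (f₁ r, f₂ r)) (fun r => (g₁ r, g₂ r)) (Ioo (-(|t|+1)) (|t|+1)) := by
    apply ODE_solution_unique_of_mem_Ioo (v := fun _ x => L x) (s := fun _ => (univ : Set (ℝ × ℝ)))
      (K := ‖L‖₊) (t₀ := 0)
    · intro s _
      exact (L.lipschitz).lipschitzOnWith
    · have := abs_nonneg t
      constructor <;> nlinarith
    · intro s _
      exact ⟨hd f₁ f₂ hf₁ hf₂ hf₁' hf₂' s, trivial⟩
    · intro s _
      exact ⟨hd g₁ g₂ hg₁ hg₂ hg₁' hg₂' s, trivial⟩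
    · simp [h1, h2]
  have ht : t ∈ Ioo (-(|t|+1)) (|t|+1) := by
    have h1 := abs_nonneg t
    have h2 := neg_abs_le t
    have h3 := le_abs_self t
    constructor <;> nlinarith
  have := key ht
  exact ⟨congrArg Prod.fst this, congrArg Prod.snd this⟩

/-- Structure of solutions at time 1, given "cosine/sine"-type functions `c`, `s`
for the constant `κ = ε² - λ²`. -/
lemma ode_sol_form {ε lam : ℝ} {f₁ f₂ : ℝ → ℝ}
    (hf₁ : Differentiable ℝ f₁) (hf₂ : Differentiable ℝ f₂)
    (hf₁' : ∀ t, deriv f₁ t = -ε * f₁ t - lam * f₂ t)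
    (hf₂' : ∀ t, deriv f₂ t = lam * f₁ t + ε * f₂ t)
    (c s : ℝ → ℝ) (hcd : Differentiable ℝ c) (hsd : Differentiable ℝ s)
    (hc' : ∀ t, deriv c t = (ε^2 - lam^2) * s t)
    (hs' : ∀ t, deriv s t = c t)
    (hc0 : c 0 = 1) (hs0 : s 0 = 0) :
    f₁ 1 = f₁ 0 * c 1 + (-ε * f₁ 0 - lam * f₂ 0) * s 1 ∧
      f₂ 1 = f₂ 0 * c 1 + (lam * f₁ 0 + ε * f₂ 0) * s 1 := by
  set a := f₁ 0
  set b := f₂ 0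
  set g₁ : ℝ → ℝ := fun t => a * c t + (-ε * a - lam * b) * s t with hg₁def
  set g₂ : ℝ → ℝ := fun t => b * c t + (lam * a + ε * b) * s t with hg₂def
  have hg₁ : Differentiable ℝ g₁ := (hcd.const_mul a).add (hsd.const_mul _)
  have hg₂ : Differentiable ℝ g₂ := (hcd.const_mul b).add (hsd.const_mul _)
  have hdg₁ : ∀ t, deriv g₁ t = a * deriv c t + (-ε * a - lam * b) * deriv s t := fun t =>
    ((((hcd t).hasDerivAt.const_mul a).add ((hsd t).hasDerivAt.const_mul _)).deriv)
  have hdg₂ : ∀ t, deriv g₂ t = b * deriv c t + (lam * a + ε * b) * deriv s t := fun t =>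
    ((((hcd t).hasDerivAt.const_mul b).add ((hsd t).hasDerivAt.const_mul _)).deriv)
  have huniq := ode_uniq hf₁ hf₂ hf₁' hf₂' hg₁ hg₂
    (fun t => by rw [hdg₁ t, hc' t, hs' t]; simp only [hg₁def, hg₂def]; ring)
    (fun t => by rw [hdg₂ t, hc' t, hs' t]; simp only [hg₁def, hg₂def]; ring)
    (by simp [hg₁def, hc0, hs0]; rfl) (by simp [hg₂def, hc0, hs0]; rfl)
  exact (huniq 1)

lemma ode_nonzero_init {ε lam : ℝ} {f₁ f₂ : ℝ → ℝ}
    (hf₁ : Differentiable ℝ f₁) (hf₂ : Differentiable ℝ f₂)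
    (hf₁' : ∀ t, deriv f₁ t = -ε * f₁ t - lam * f₂ t)
    (hf₂' : ∀ t, deriv f₂ t = lam * f₁ t + ε * f₂ t)
    (hne : ¬ ∀ t, f₁ t = 0 ∧ f₂ t = 0) :
    ¬ (f₁ 0 = 0 ∧ f₂ 0 = 0) := by
  rintro ⟨h1, h2⟩
  exact hne (ode_uniq hf₁ hf₂ hf₁' hf₂' (differentiable_const 0) (differentiable_const 0)
    (fun t => by simp) (fun t => by simp) (by simpa using h1) (by simpa using h2))

lemma det_zero {ε lam C S a b : ℝ}
    (h1 : a * C + (-ε * a - lam * b) * S = -a)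
    (h2 : b * C + (lam * a + ε * b) * S = -b)
    (hab : ¬ (a = 0 ∧ b = 0)) :
    (C + 1)^2 - (ε^2 - lam^2) * S^2 = 0 := by
  by_contra hD
  have ha : ((C + 1)^2 - (ε^2 - lam^2) * S^2) * a = 0 := by
    linear_combination (C + 1 + ε * S) * h1 + lam * S * h2
  have hb : ((C + 1)^2 - (ε^2 - lam^2) * S^2) * b = 0 := by
    linear_combination (C + 1 - ε * S) * h2 - lam * S * h1
  exact hab ⟨by rcases mul_eq_zero.mp ha with h | h; exact absurd h hD; exact h,
    by rcases mul_eq_zero.mp hb with h | h; exact absurd h hD; exact h⟩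

lemma haslin (ω t : ℝ) : HasDerivAt (fun x : ℝ => ω * x) ω t := by
  simpa using (hasDerivAt_id t).const_mul ω


set_option maxHeartbeats 2000000 in
/-- Eigenvalues of the asymptotic operator of a negative hyperbolic Reeb orbit:
there is a nonzero antiperiodic solution of `f' = P_λ f` iff
`λ = ±√(((2n-1)π)² + ε²)` for some positive integer `n`. -/
theorem stmt_2 (ε lam : ℝ) (hε : 0 < ε) :
    (∃ f₁ f₂ : ℝ → ℝ, Differentiable ℝ f₁ ∧ Differentiable ℝ f₂ ∧
        (∀ t, deriv f₁ t = -ε * f₁ t - lam * f₂ t) ∧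
        (∀ t, deriv f₂ t = lam * f₁ t + ε * f₂ t) ∧
        (¬ ∀ t, f₁ t = 0 ∧ f₂ t = 0) ∧
        f₁ 1 = -f₁ 0 ∧ f₂ 1 = -f₂ 0) ↔
      (∃ n : ℕ, 0 < n ∧
        (lam = Real.sqrt (((2 * n - 1) * Real.pi) ^ 2 + ε ^ 2) ∨
         lam = -Real.sqrt (((2 * n - 1) * Real.pi) ^ 2 + ε ^ 2))) := by
  constructor
  · intro h
    obtain ⟨f₁, f₂, hf₁, hf₂, hf₁', hf₂', hne, hb₁, hb₂⟩ := h
    have hab := ode_nonzero_init hf₁ hf₂ hf₁' hf₂' hne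
    rcases lt_trichotomy (lam ^ 2) (ε ^ 2) with hκ | hκ | hκ
    · -- hyperbolic case: impossible
      exfalso
      set μ : ℝ := Real.sqrt (ε ^ 2 - lam ^ 2) with hμdef
      have hμ : 0 < μ := Real.sqrt_pos.mpr (by linarith)
      have hμ2 : μ ^ 2 = ε ^ 2 - lam ^ 2 := Real.sq_sqrt (by linarith)
      clear_value μ
      have hch : ∀ t : ℝ, HasDerivAt (fun x => Real.cosh (μ * x)) (Real.sinh (μ * t) * μ) t :=
        fun t => (haslin μ t).cosh
      have hsh : ∀ t : ℝ, HasDerivAt (fun x => Real.sinh (μ * x) / μ) (Real.cosh (μ * t) * μ / μ) t :=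
        fun t => ((haslin μ t).sinh).div_const μ
      obtain ⟨E1, E2⟩ := ode_sol_form hf₁ hf₂ hf₁' hf₂'
        (fun x => Real.cosh (μ * x)) (fun x => Real.sinh (μ * x) / μ)
        (fun t => (hch t).differentiableAt) (fun t => (hsh t).differentiableAt)
        (fun t => by
          rw [(hch t).deriv]
          field_simp
          linear_combination Real.sinh (μ * t) * hμ2)
        (fun t => by rw [(hsh t).deriv]; field_simp)
        (by norm_num) (by norm_num)
      rw [mul_one] at E1 E2
      have h1 : f₁ 0 * Real.cosh μ + (-ε * f₁ 0 - lam * f₂ 0) * (Real.sinh μ / μ) = -f₁ 0 := by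
        rw [← E1, hb₁]
      have h2 : f₂ 0 * Real.cosh μ + (lam * f₁ 0 + ε * f₂ 0) * (Real.sinh μ / μ) = -f₂ 0 := by
        rw [← E2, hb₂]
      have hD := det_zero h1 h2 hab
      have hcs := Real.cosh_sq μ
      have hc1 := Real.one_le_cosh μ
      have hμn : μ ≠ 0 := ne_of_gt hμ
      field_simp at hD
      rw [← hμ2] at hD
      nlinarith [mul_pos hμ hμ, hcs, hc1]
    · -- degenerate case: impossible
      exfalso
      obtain ⟨E1, E2⟩ := ode_sol_form hf₁ hf₂ hf₁' hf₂' (fun _ => 1) (fun x => x)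
        (differentiable_const 1) differentiable_id
        (fun t => by simp [hκ.symm])
        (fun t => by simp) rfl rfl
      have h1 : f₁ 0 * 1 + (-ε * f₁ 0 - lam * f₂ 0) * 1 = -f₁ 0 := by rw [← E1, hb₁]
      have h2 : f₂ 0 * 1 + (lam * f₁ 0 + ε * f₂ 0) * 1 = -f₂ 0 := by rw [← E2, hb₂]
      have hD := det_zero h1 h2 hab
      nlinarith
    · -- elliptic case
      set ω : ℝ := Real.sqrt (lam ^ 2 - ε ^ 2) with hωdef
      have hω : 0 < ω := Real.sqrt_pos.mpr (by linarith)
      have hω2 : ω ^ 2 = lam ^ 2 - ε ^ 2 := Real.sq_sqrt (by linarith)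
      clear_value ω
      have hωn : ω ≠ 0 := ne_of_gt hω
      have hc : ∀ t : ℝ, HasDerivAt (fun x => Real.cos (ω * x)) (-Real.sin (ω * t) * ω) t :=
        fun t => (haslin ω t).cos
      have hs : ∀ t : ℝ, HasDerivAt (fun x => Real.sin (ω * x) / ω) (Real.cos (ω * t) * ω / ω) t :=
        fun t => ((haslin ω t).sin).div_const ω
      obtain ⟨E1, E2⟩ := ode_sol_form hf₁ hf₂ hf₁' hf₂'
        (fun x => Real.cos (ω * x)) (fun x => Real.sin (ω * x) / ω)
        (fun t => (hc t).differentiableAt) (fun t => (hs t).differentiableAt)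
        (fun t => by
          rw [(hc t).deriv]
          field_simp
          linear_combination (-1 : ℝ) * Real.sin (ω * t) * hω2)
        (fun t => by rw [(hs t).deriv]; field_simp)
        (by norm_num) (by norm_num)
      have h1 : f₁ 0 * Real.cos (ω * 1) + (-ε * f₁ 0 - lam * f₂ 0) * (Real.sin (ω * 1) / ω) = -f₁ 0 := by
        rw [← E1, hb₁]
      have h2 : f₂ 0 * Real.cos (ω * 1) + (lam * f₁ 0 + ε * f₂ 0) * (Real.sin (ω * 1) / ω) = -f₂ 0 := by
        rw [← E2, hb₂]
      have hD := det_zero h1 h2 hab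
      rw [mul_one] at hD
      have hkey : (Real.cos ω + 1) ^ 2 + (Real.sin ω) ^ 2 = 0 := by
        field_simp at hD
        nlinarith [sq_nonneg ω]
      have hcos : Real.cos ω = -1 := by nlinarith [sq_nonneg (Real.cos ω + 1), sq_nonneg (Real.sin ω)]
      obtain ⟨k, hk⟩ := Real.cos_eq_neg_one_iff.mp hcos
      have hk0 : 0 ≤ k := by
        by_contra hneg
        push_neg at hneg
        have hk1 : k ≤ -1 := by omega
        have : (k : ℝ) ≤ -1 := by exact_mod_cast hk1
        nlinarith [Real.pi_pos, hω, hk, this]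
      refine ⟨k.toNat + 1, Nat.succ_pos _, ?_⟩
      have hωval : (2 * ((k.toNat : ℝ) + 1) - 1) * π = ω := by
        rw [← hk]
        have : ((k.toNat : ℝ)) = (k : ℝ) := by exact_mod_cast Int.toNat_of_nonneg hk0
        rw [this]
        ring
      have hval : ((2 * ((k.toNat + 1 : ℕ) : ℝ) - 1) * π) ^ 2 + ε ^ 2 = lam ^ 2 := by
        push_cast
        rw [hωval]
        linarith
      have hlam : lam ≠ 0 := by
        intro h
        rw [h] at hκ
        norm_num at hκ
        exact absurd hκ (by positivity : (0:ℝ) ≤ ε ^ 2).not_gt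
      rcases hlam.lt_or_gt with hl | hl
      · right
        rw [hval, Real.sqrt_sq_eq_abs, abs_of_neg hl, neg_neg]
      · left
        rw [hval, Real.sqrt_sq hl.le]
  · rintro ⟨n, hn, hl⟩
    set ω : ℝ := (2 * n - 1) * Real.pi with hωdef
    have hX : (0:ℝ) ≤ ω ^ 2 + ε ^ 2 := by positivity
    have hω2 : lam ^ 2 = ω ^ 2 + ε ^ 2 := by
      rcases hl with h | h <;> rw [h]
      · exact Real.sq_sqrt hX
      · rw [neg_pow]; norm_num [Real.sq_sqrt hX]
    have hlam0 : lam ≠ 0 := by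
      intro h
      rw [h] at hω2
      nlinarith
    clear_value ω
    have hcos : Real.cos ω = -1 := by
      apply Real.cos_eq_neg_one_iff.mpr
      refine ⟨(n : ℤ) - 1, ?_⟩
      rw [hωdef]
      push_cast
      ring
    have hsin : Real.sin ω = 0 := by
      have h := Real.sin_sq_add_cos_sq ω
      nlinarith
    have hc : ∀ t : ℝ, HasDerivAt (fun x => Real.cos (ω * x)) (-Real.sin (ω * t) * ω) t :=
      fun t => (haslin ω t).cos
    have hs : ∀ t : ℝ, HasDerivAt (fun x => Real.sin (ω * x)) (Real.cos (ω * t) * ω) t :=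
      fun t => (haslin ω t).sin
    have hf2 : ∀ t : ℝ, HasDerivAt (fun x => (ω * Real.sin (ω * x) - ε * Real.cos (ω * x)) / lam)
        ((ω * (Real.cos (ω * t) * ω) - ε * (-Real.sin (ω * t) * ω)) / lam) t :=
      fun t => (((hs t).const_mul ω).sub ((hc t).const_mul ε)).div_const lam
    refine ⟨fun t => Real.cos (ω * t),
      fun t => (ω * Real.sin (ω * t) - ε * Real.cos (ω * t)) / lam, ?_, ?_, ?_, ?_, ?_, ?_, ?_⟩
    · exact fun t => (hc t).differentiableAt
    · exact fun t => (hf2 t).differentiableAt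
    · intro t
      rw [(hc t).deriv]
      field_simp
      ring
    · intro t
      rw [(hf2 t).deriv]
      field_simp
      linear_combination (-1 : ℝ) * Real.cos (ω * t) * hω2
    · intro h
      have := (h 0).1
      norm_num at this
    · simp [hcos]
    · simp [hsin, hcos]
      ring
end
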